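/- For every integer d ≥ 1 there is a constant c depending only on d such that the following holds for every ε ∈ (0,1). Every finite graph G with VC dimension at most d admits a partition V(G) = V₁ ⊔ ⋯ ⊔ V_K with K ≤ (1/ε)^c such that at least a (1−ε)-fraction of the pairs (x,y) ∈ V(G)² lie in an ε-homogeneous pair (V_i, V_j). -/

import Mathlib

open scoped Classical

def twr : ℕ → ℕ → ℕ
  | 0, x => x
  | n + 1, x => 2 ^ twr n x

def tower (n : ℕ) : ℕ := twr n 1

variable {V : Type}

noncomputable def bipDensity [DecidableEq V] (Z : Finset (V × V)) (X Y : Finset V) : ℝ :=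
  ((Z ∩ X ×ˢ Y).card : ℝ) / ((X.card : ℝ) * (Y.card : ℝ))

def funcQuasi (X Y : Finset V) (f : V → V → ℝ) (α : ℝ) : Prop :=
  ∑ x ∈ X, ∑ x' ∈ X, ∑ y ∈ Y, ∑ y' ∈ Y, f x y * f x' y * f x y' * f x' y'
    ≤ α * (X.card : ℝ) ^ 2 * (Y.card : ℝ) ^ 2

def bipQuasi [DecidableEq V] (Z : Finset (V × V)) (X Y : Finset V) (α : ℝ) : Prop :=
  funcQuasi X Y (fun x y => (if (x, y) ∈ Z then (1 : ℝ) else 0) - bipDensity Z X Y) α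

def triangles [DecidableEq V] (Z12 Z13 Z23 : Finset (V × V)) (Y1 Y2 Y3 : Finset V) :
    Finset (V × V × V) :=
  (Y1 ×ˢ Y2 ×ˢ Y3).filter fun p =>
    (p.1, p.2.1) ∈ Z12 ∧ (p.1, p.2.2) ∈ Z13 ∧ (p.2.1, p.2.2) ∈ Z23

noncomputable def relDensity [DecidableEq V] (H : V → V → V → Prop)
    (Z12 Z13 Z23 : Finset (V × V)) (Y1 Y2 Y3 : Finset V) : ℝ :=
  (((triangles Z12 Z13 Z23 Y1 Y2 Y3).filter fun p => H p.1 p.2.1 p.2.2).card : ℝ) /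
    ((triangles Z12 Z13 Z23 Y1 Y2 Y3).card : ℝ)

noncomputable def chainFn [DecidableEq V] (H : V → V → V → Prop)
    (Z12 Z13 Z23 : Finset (V × V)) (Y1 Y2 Y3 : Finset V) (x y z : V) : ℝ :=
  if (x, y, z) ∈ triangles Z12 Z13 Z23 Y1 Y2 Y3 then
    (if H x y z then (1 : ℝ) else 0) - relDensity H Z12 Z13 Z23 Y1 Y2 Y3
  else 0

def hQuasi [DecidableEq V] (H : V → V → V → Prop) (Z12 Z13 Z23 : Finset (V × V))
    (Y1 Y2 Y3 : Finset V) (η : ℝ) : Prop :=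
  ∑ x ∈ Y1, ∑ x' ∈ Y1, ∑ y ∈ Y2, ∑ y' ∈ Y2, ∑ z ∈ Y3, ∑ z' ∈ Y3,
      chainFn H Z12 Z13 Z23 Y1 Y2 Y3 x y z * chainFn H Z12 Z13 Z23 Y1 Y2 Y3 x y z' *
        chainFn H Z12 Z13 Z23 Y1 Y2 Y3 x y' z * chainFn H Z12 Z13 Z23 Y1 Y2 Y3 x y' z' *
        chainFn H Z12 Z13 Z23 Y1 Y2 Y3 x' y z * chainFn H Z12 Z13 Z23 Y1 Y2 Y3 x' y z' *
        chainFn H Z12 Z13 Z23 Y1 Y2 Y3 x' y' z * chainFn H Z12 Z13 Z23 Y1 Y2 Y3 x' y' z'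
    ≤ η * (bipDensity Z12 Y1 Y2 * bipDensity Z13 Y1 Y3 * bipDensity Z23 Y2 Y3) ^ 4 *
        (Y1.card : ℝ) ^ 2 * (Y2.card : ℝ) ^ 2 * (Y3.card : ℝ) ^ 2

noncomputable def triProdDensity [DecidableEq V] (Z12 Z13 Z23 : Finset (V × V))
    (Y1 Y2 Y3 : Finset V) : ℝ :=
  bipDensity Z12 Y1 Y2 * bipDensity Z13 Y1 Y3 * bipDensity Z23 Y2 Y3

def triGraphQuasi [DecidableEq V] (Z12 Z13 Z23 : Finset (V × V)) (Y1 Y2 Y3 : Finset V)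
    (α : ℝ) : Prop :=
  bipQuasi Z12 Y1 Y2 α ∧ bipQuasi Z13 Y1 Y3 α ∧ bipQuasi Z23 Y2 Y3 α

def triChainQuasi [DecidableEq V] (H : V → V → V → Prop) (Z12 Z13 Z23 : Finset (V × V))
    (Y1 Y2 Y3 : Finset V) (η : ℝ) (ψ : ℝ → ℝ) : Prop :=
  hQuasi H Z12 Z13 Z23 Y1 Y2 Y3 η ∧
    triGraphQuasi Z12 Z13 Z23 Y1 Y2 Y3 (ψ (triProdDensity Z12 Z13 Z23 Y1 Y2 Y3))

def IsPolyFn (ψ : ℝ → ℝ) : Prop :=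
  ∃ c : ℝ, ∃ k : ℕ, 0 < c ∧ 1 ≤ k ∧ ∀ x : ℝ, ψ x = c * x ^ k

def IsVertexPartition (P : Finset (Finset V)) (S : Finset V) : Prop :=
  (∀ Y ∈ P, Y ⊆ S) ∧ ∀ x ∈ S, ∃! Y, Y ∈ P ∧ x ∈ Y

def IsSubPartition [DecidableEq V] (P : Finset (Finset (V × V))) (E : Finset (V × V)) : Prop :=
  (∀ Z ∈ P, Z ⊆ E) ∧ ∀ e ∈ E, ∃! Z, Z ∈ P ∧ e ∈ Z

def IsBipPartition [DecidableEq V] (P : Finset (Finset (V × V))) (X Y : Finset V) : Prop :=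
  IsSubPartition P (X ×ˢ Y)

def Is3Graph (H : Finset (Finset V)) : Prop := ∀ e ∈ H, e.card = 3

def hPred [DecidableEq V] (H : Finset (Finset V)) (x y z : V) : Prop :=
  ({x, y, z} : Finset V) ∈ H

def HasShattered [DecidableEq V] (H : Finset (Finset V)) (d : ℕ) : Prop :=
  ∃ A B : Finset V, Disjoint A B ∧ A.card = d ∧ B.card = d ∧
    ∀ S ⊆ A ×ˢ B, ∃ v : V, ∀ a ∈ A, ∀ b ∈ B, (({a, b, v} : Finset V) ∈ H ↔ (a, b) ∈ S)

def VC2dimLE [DecidableEq V] (H : Finset (Finset V)) (d : ℕ) : Prop := ¬ HasShattered H (d + 1)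

def IsChainPartition [Fintype V] [DecidableEq V] (QV : Finset (Finset V))
    (QE : Finset V → Finset V → Finset (Finset (V × V))) : Prop :=
  IsVertexPartition QV Finset.univ ∧
    ∀ Y ∈ QV, ∀ Y' ∈ QV, Y ≠ Y' → IsBipPartition (QE Y Y') Y Y'

def IsCylPartition {t : ℕ} [DecidableEq V] (PV : Finset (Fin t → Finset V))
    (X : Fin t → Finset V) : Prop :=
  (∀ Y ∈ PV, ∀ i, Y i ⊆ X i) ∧
    ∀ x ∈ Fintype.piFinset X, ∃! Y, Y ∈ PV ∧ ∀ i, x i ∈ Y i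

def tGraphQuasi {t : ℕ} [DecidableEq V] (Z : Fin t → Fin t → Finset (V × V))
    (Y : Fin t → Finset V) (α : ℝ) : Prop :=
  ∀ i j : Fin t, i < j → bipQuasi (Z i j) (Y i) (Y j) α

noncomputable def prodDensity {t : ℕ} [DecidableEq V] (Z : Fin t → Fin t → Finset (V × V))
    (Y : Fin t → Finset V) : ℝ :=
  ∏ p ∈ Finset.univ.filter (fun p : Fin t × Fin t => p.1 < p.2),
    bipDensity (Z p.1 p.2) (Y p.1) (Y p.2)

def tChainQuasi {t : ℕ} [DecidableEq V] (H : V → V → V → Prop)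
    (Z : Fin t → Fin t → Finset (V × V)) (Y : Fin t → Finset V) (η : ℝ) (ψ : ℝ → ℝ) : Prop :=
  (∀ i j k : Fin t, i < j → j < k →
      hQuasi H (Z i j) (Z i k) (Z j k) (Y i) (Y j) (Y k) η) ∧
    tGraphQuasi Z Y (ψ (prodDensity Z Y))


/-- VC dimension of a graph is at most `d`. -/
def VCdimLE {V : Type} [Fintype V] [DecidableEq V] (G : SimpleGraph V) (d : ℕ) : Prop :=
  ∀ S : Finset V, (∀ T ⊆ S, ∃ v : V, S.filter (fun u => G.Adj v u) = T) → S.card ≤ d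

noncomputable def gDensity {V : Type} [DecidableEq V] (G : SimpleGraph V)
    (A B : Finset V) : ℝ :=
  (((A ×ˢ B).filter fun p => G.Adj p.1 p.2).card : ℝ) / ((A.card : ℝ) * (B.card : ℝ))

set_option linter.unusedSectionVars false

noncomputable section
variable {V : Type} [Fintype V] [DecidableEq V]

namespace GPR

def aR (G : SimpleGraph V) (x y : V) : ℝ := if G.Adj x y then 1 else 0

def dd (G : SimpleGraph V) (x x' : V) : ℕ :=
  ((Finset.univ : Finset V).filter fun y => ¬ (G.Adj x y ↔ G.Adj x' y)).card

lemma dd_triangle (G : SimpleGraph V) (x y z : V) : dd G x z ≤ dd G x y + dd G y z := by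
  unfold dd
  refine le_trans (Finset.card_le_card ?_) (Finset.card_union_le _ _)
  intro w hw
  simp only [Finset.mem_filter, Finset.mem_union, Finset.mem_univ, true_and] at *
  by_cases h : G.Adj x w ↔ G.Adj y w
  · right; tauto
  · left; exact h

lemma dd_symm (G : SimpleGraph V) (x y : V) : dd G x y = dd G y x := by
  unfold dd; congr 1; apply Finset.filter_congr; intro w _; constructor <;> (intro h; tauto)

lemma sum_abs_row (G : SimpleGraph V) (x x' : V) :
    ∑ y, |aR G x y - aR G x' y| = (dd G x x' : ℝ) := by
  unfold aR dd
  rw [Finset.card_filter]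
  push_cast
  apply Finset.sum_congr rfl
  intro y _
  by_cases h1 : G.Adj x y <;> by_cases h2 : G.Adj x' y <;> simp [h1, h2]

lemma sum_abs_col (G : SimpleGraph V) (y y' : V) :
    ∑ x, |aR G x y - aR G x y'| = (dd G y y' : ℝ) := by
  have h : ∀ x, |aR G x y - aR G x y'| = |aR G y x - aR G y' x| := by
    intro x; unfold aR; rw [G.adj_comm x y, G.adj_comm x y']
  simp_rw [h]; exact sum_abs_row G y y'

lemma gDensity_eq (G : SimpleGraph V) (A B : Finset V) :
    gDensity G A B = (∑ x ∈ A, ∑ y ∈ B, aR G x y) / ((A.card : ℝ) * B.card) := by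
  unfold gDensity aR
  congr 1
  rw [Finset.card_filter]
  push_cast
  rw [Finset.sum_product]

end GPR
end
noncomputable section
namespace GPR
open Finset
variable {V : Type} [Fintype V] [DecidableEq V]

def Cl (f : V → V) (x : V) : Finset V := Finset.univ.filter fun u => f u = f x

lemma mem_Cl (f : V → V) (x : V) : x ∈ Cl f x := by simp [Cl]

lemma Cl_card_pos (f : V → V) (x : V) : 0 < ((Cl f x).card : ℝ) := by
  have := Finset.card_pos.2 ⟨x, mem_Cl f x⟩
  exact_mod_cast this

lemma Cl_eq_of_mem (f : V → V) {x x' : V} (h : x' ∈ Cl f x) : Cl f x' = Cl f x := by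
  simp only [Cl, mem_filter, mem_univ, true_and] at h
  simp only [Cl, h]

lemma fiber_sum (f : V → V) (g : V → ℝ) :
    ∑ x, (∑ x' ∈ Cl f x, g x') / ((Cl f x).card : ℝ) = ∑ x, g x := by
  have h1 : ∀ z : V, ∑ x ∈ Finset.univ.filter (fun u => f u = z),
      ((∑ x' ∈ Cl f x, g x') / ((Cl f x).card : ℝ))
      = ∑ x' ∈ Finset.univ.filter (fun u => f u = z), g x' := by
    intro z
    rcases (Finset.univ.filter (fun u => f u = z)).eq_empty_or_nonempty with he | hne
    · simp [he]
    · have hx : ∀ x ∈ Finset.univ.filter (fun u => f u = z), Cl f x = Finset.univ.filter (fun u => f u = z) := by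
        intro x hx
        simp only [mem_filter, mem_univ, true_and] at hx
        simp only [Cl, hx]
      rw [Finset.sum_congr rfl (fun x hx' => by rw [hx x hx'])]
      rw [Finset.sum_const]
      have hc : ((Finset.univ.filter (fun u => f u = z)).card : ℝ) ≠ 0 := by
        exact_mod_cast Finset.card_ne_zero_of_mem hne.choose_spec
      rw [nsmul_eq_mul]
      field_simp
  calc ∑ x, (∑ x' ∈ Cl f x, g x') / ((Cl f x).card : ℝ)
      = ∑ z : V, ∑ x ∈ Finset.univ.filter (fun u => f u = z),
          ((∑ x' ∈ Cl f x, g x') / ((Cl f x).card : ℝ)) :=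
        (Finset.sum_fiberwise _ _ _).symm
    _ = ∑ z : V, ∑ x' ∈ Finset.univ.filter (fun u => f u = z), g x' :=
        Finset.sum_congr rfl fun z _ => h1 z
    _ = ∑ x, g x := Finset.sum_fiberwise _ _ _

end GPR
end
noncomputable section
namespace GPR
open Finset
variable {V : Type} [Fintype V] [DecidableEq V]

lemma dd_Cl (G : SimpleGraph V) (f : V → V) (δ : ℝ)
    (hf : ∀ v, (dd G v (f v) : ℝ) ≤ δ * (Fintype.card V : ℝ))
    {x x' : V} (h : x' ∈ Cl f x) :
    (dd G x x' : ℝ) ≤ 2 * (δ * (Fintype.card V : ℝ)) := by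
  have hfx : f x' = f x := by simpa [Cl] using h
  have h1 : dd G x x' ≤ dd G x (f x) + dd G (f x) x' := dd_triangle G x (f x) x'
  have h2 : dd G (f x) x' = dd G x' (f x') := by rw [dd_symm, hfx]
  have := hf x
  have := hf x'
  have hcast : (dd G x x' : ℝ) ≤ (dd G x (f x) : ℝ) + (dd G (f x) x' : ℝ) := by
    exact_mod_cast h1
  rw [h2] at hcast
  linarith

lemma pointwise_bound (G : SimpleGraph V) (f : V → V) (x y : V) :
    |aR G x y - gDensity G (Cl f x) (Cl f y)| ≤
      (∑ x' ∈ Cl f x, ∑ y' ∈ Cl f y,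
        (|aR G x y - aR G x' y| + |aR G x' y - aR G x' y'|)) /
        (((Cl f x).card : ℝ) * ((Cl f y).card : ℝ)) := by
  have hcx := Cl_card_pos f x
  have hcy := Cl_card_pos f y
  have hne : ((Cl f x).card : ℝ) * ((Cl f y).card : ℝ) ≠ 0 := by positivity
  have hT : ∑ x' ∈ Cl f x, ∑ y' ∈ Cl f y, (aR G x y - aR G x' y')
      = (((Cl f x).card : ℝ) * ((Cl f y).card : ℝ)) * aR G x y
        - ∑ x' ∈ Cl f x, ∑ y' ∈ Cl f y, aR G x' y' := by
    simp only [Finset.sum_sub_distrib, Finset.sum_const, nsmul_eq_mul]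
    ring
  have e1 : aR G x y - gDensity G (Cl f x) (Cl f y)
      = (∑ x' ∈ Cl f x, ∑ y' ∈ Cl f y, (aR G x y - aR G x' y')) /
        (((Cl f x).card : ℝ) * ((Cl f y).card : ℝ)) := by
    rw [gDensity_eq, hT, sub_div, mul_div_cancel_left₀ _ hne]
  rw [e1, abs_div, abs_of_pos (by positivity : (0:ℝ) < ((Cl f x).card : ℝ) * ((Cl f y).card : ℝ))]
  rw [div_le_div_iff_of_pos_right (by positivity)]
  refine (Finset.abs_sum_le_sum_abs _ _).trans ?_
  refine Finset.sum_le_sum fun x' _ => ?_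
  refine (Finset.abs_sum_le_sum_abs _ _).trans ?_
  exact Finset.sum_le_sum fun y' _ => abs_sub_le _ _ _

end GPR
end
noncomputable section
namespace GPR
open Finset
variable {V : Type} [Fintype V] [DecidableEq V]

lemma split_frac (G : SimpleGraph V) (f : V → V) (x y : V) :
    (∑ x' ∈ Cl f x, ∑ y' ∈ Cl f y,
      (|aR G x y - aR G x' y| + |aR G x' y - aR G x' y'|)) /
      (((Cl f x).card : ℝ) * ((Cl f y).card : ℝ))
    = (∑ x' ∈ Cl f x, |aR G x y - aR G x' y|) / ((Cl f x).card : ℝ)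
      + (∑ x' ∈ Cl f x, (∑ y' ∈ Cl f y, |aR G x' y - aR G x' y'|) / ((Cl f y).card : ℝ)) /
        ((Cl f x).card : ℝ) := by
  have hcx := Cl_card_pos f x
  have hcy := Cl_card_pos f y
  simp only [Finset.sum_add_distrib, Finset.sum_const, nsmul_eq_mul]
  rw [← Finset.mul_sum, add_div]
  congr 1
  · rw [mul_comm ((Cl f x).card : ℝ) ((Cl f y).card : ℝ),
      mul_div_mul_left _ _ hcy.ne']
  · rw [← Finset.sum_div, div_div, mul_comm ((Cl f y).card : ℝ)]

lemma global_bound (G : SimpleGraph V) (f : V → V) (δ : ℝ) (hδ : 0 ≤ δ)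
    (hf : ∀ v, (dd G v (f v) : ℝ) ≤ δ * (Fintype.card V : ℝ)) :
    ∑ x, ∑ y, |aR G x y - gDensity G (Cl f x) (Cl f y)|
      ≤ 4 * δ * (Fintype.card V : ℝ) ^ 2 := by
  set n : ℝ := (Fintype.card V : ℝ) with hn
  have hn0 : 0 ≤ n := by positivity
  have hP : ∀ x, ∑ y, (∑ x' ∈ Cl f x, |aR G x y - aR G x' y|) / ((Cl f x).card : ℝ)
      ≤ 2 * (δ * n) := by
    intro x
    rw [← Finset.sum_div, Finset.sum_comm]
    have hb : ∑ x' ∈ Cl f x, ∑ y, |aR G x y - aR G x' y|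
        ≤ ((Cl f x).card : ℝ) * (2 * (δ * n)) := by
      have hrow : ∀ x' ∈ Cl f x, ∑ y, |aR G x y - aR G x' y| ≤ 2 * (δ * n) := by
        intro x' hx'; rw [sum_abs_row G x x']; exact dd_Cl G f δ hf hx'
      calc ∑ x' ∈ Cl f x, ∑ y, |aR G x y - aR G x' y|
          ≤ ∑ _x' ∈ Cl f x, 2 * (δ * n) := Finset.sum_le_sum hrow
        _ = ((Cl f x).card : ℝ) * (2 * (δ * n)) := by
            rw [Finset.sum_const, nsmul_eq_mul]
    rw [div_le_iff₀ (Cl_card_pos f x)]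
    linarith
  have hQ : ∀ y, ∑ y' ∈ Cl f y, ∑ x', |aR G x' y - aR G x' y'|
      ≤ ((Cl f y).card : ℝ) * (2 * (δ * n)) := by
    intro y
    have hcol : ∀ y' ∈ Cl f y, ∑ x', |aR G x' y - aR G x' y'| ≤ 2 * (δ * n) := by
      intro y' hy'; rw [sum_abs_col G y y']; exact dd_Cl G f δ hf hy'
    calc ∑ y' ∈ Cl f y, ∑ x', |aR G x' y - aR G x' y'|
        ≤ ∑ _y' ∈ Cl f y, 2 * (δ * n) := Finset.sum_le_sum hcol
      _ = ((Cl f y).card : ℝ) * (2 * (δ * n)) := by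
          rw [Finset.sum_const, nsmul_eq_mul]
  calc ∑ x, ∑ y, |aR G x y - gDensity G (Cl f x) (Cl f y)|
      ≤ ∑ x, ∑ y,
        ((∑ x' ∈ Cl f x, |aR G x y - aR G x' y|) / ((Cl f x).card : ℝ)
          + (∑ x' ∈ Cl f x, (∑ y' ∈ Cl f y, |aR G x' y - aR G x' y'|) / ((Cl f y).card : ℝ)) /
            ((Cl f x).card : ℝ)) := by
        refine Finset.sum_le_sum fun x _ => Finset.sum_le_sum fun y _ => ?_
        exact (pointwise_bound G f x y).trans_eq (split_frac G f x y)
    _ = (∑ x, ∑ y, (∑ x' ∈ Cl f x, |aR G x y - aR G x' y|) / ((Cl f x).card : ℝ))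
        + ∑ x, ∑ y, (∑ x' ∈ Cl f x, (∑ y' ∈ Cl f y, |aR G x' y - aR G x' y'|) /
            ((Cl f y).card : ℝ)) / ((Cl f x).card : ℝ) := by
        simp only [Finset.sum_add_distrib]
    _ ≤ 2 * δ * n ^ 2 + 2 * δ * n ^ 2 := by
        gcongr ?_ + ?_
        · calc ∑ x, ∑ y, (∑ x' ∈ Cl f x, |aR G x y - aR G x' y|) / ((Cl f x).card : ℝ)
              ≤ ∑ _x : V, 2 * (δ * n) := Finset.sum_le_sum fun x _ => hP x
            _ = n * (2 * (δ * n)) := by rw [Finset.sum_const, nsmul_eq_mul]; rfl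
            _ = 2 * δ * n ^ 2 := by ring
        · rw [Finset.sum_comm]
          have h1 : ∀ y : V, ∑ x, (∑ x' ∈ Cl f x,
              (∑ y' ∈ Cl f y, |aR G x' y - aR G x' y'|) / ((Cl f y).card : ℝ)) /
              ((Cl f x).card : ℝ)
              = ∑ x', (∑ y' ∈ Cl f y, |aR G x' y - aR G x' y'|) / ((Cl f y).card : ℝ) :=
            fun y => fiber_sum f _
          calc ∑ y, ∑ x, (∑ x' ∈ Cl f x,
                (∑ y' ∈ Cl f y, |aR G x' y - aR G x' y'|) / ((Cl f y).card : ℝ)) /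
                ((Cl f x).card : ℝ)
              = ∑ y, ∑ x', (∑ y' ∈ Cl f y, |aR G x' y - aR G x' y'|) / ((Cl f y).card : ℝ) := by
                exact Finset.sum_congr rfl fun y _ => h1 y
            _ = ∑ y, (∑ y' ∈ Cl f y, ∑ x', |aR G x' y - aR G x' y'|) / ((Cl f y).card : ℝ) := by
                refine Finset.sum_congr rfl fun y _ => ?_
                rw [← Finset.sum_div, Finset.sum_comm]
            _ ≤ ∑ _y : V, 2 * (δ * n) := by
                refine Finset.sum_le_sum fun y _ => ?_
                rw [div_le_iff₀ (Cl_card_pos f y)]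
                have := hQ y
                linarith
            _ = n * (2 * (δ * n)) := by rw [Finset.sum_const, nsmul_eq_mul]; rfl
            _ = 2 * δ * n ^ 2 := by ring
    _ = 4 * δ * n ^ 2 := by ring

end GPR
end
noncomputable section
namespace GPR
open Finset
set_option maxHeartbeats 1000000
variable {V : Type} [Fintype V] [DecidableEq V]

lemma agree_card (G : SimpleGraph V) (z z' : V) :
    ((Finset.univ.filter fun y => (G.Adj z y ↔ G.Adj z' y)).card)
      = Fintype.card V - dd G z z' := by
  have h := Finset.card_filter_add_card_filter_not
    (s := (Finset.univ : Finset V)) (p := fun y => (G.Adj z y ↔ G.Adj z' y))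
  have hc : (Finset.univ : Finset V).card = Fintype.card V := Finset.card_univ
  unfold dd
  omega

lemma exists_trace_inj (G : SimpleGraph V) (S' : Finset V) (t : ℕ) (δ : ℝ)
    (hδ1 : δ < 1)
    (hsep : ∀ z ∈ S', ∀ z' ∈ S', z ≠ z' → δ * (Fintype.card V : ℝ) < (dd G z z' : ℝ))
    (hlt : ((S'.card : ℝ)) ^ 2 * (1 - δ) ^ t < 1) (hS : S'.Nonempty) :
    ∃ T : Fin t → V, ∀ z ∈ S', ∀ z' ∈ S', z ≠ z' →
      ∃ i, ¬ (G.Adj z (T i) ↔ G.Adj z' (T i)) := by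
  have hn : 0 < Fintype.card V :=
    Fintype.card_pos_iff.2 ⟨hS.choose⟩
  by_contra hcon
  push_neg at hcon
  have hcover : (Finset.univ : Finset (Fin t → V)) ⊆
      ((S' ×ˢ S').filter fun p => p.1 ≠ p.2).biUnion
        (fun p => Finset.univ.filter fun T => ∀ i, (G.Adj p.1 (T i) ↔ G.Adj p.2 (T i))) := by
    intro T _
    obtain ⟨z, hz, z', hz', hne, hag⟩ := hcon T
    refine Finset.mem_biUnion.2 ⟨(z, z'), ?_, ?_⟩
    · exact Finset.mem_filter.2 ⟨Finset.mem_product.2 ⟨hz, hz'⟩, hne⟩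
    · exact Finset.mem_filter.2 ⟨Finset.mem_univ _, fun i => hag i⟩
  have hcard1 : (Finset.univ : Finset (Fin t → V)).card = Fintype.card V ^ t := by
    rw [Finset.card_univ, Fintype.card_fun, Fintype.card_fin]
  have hfib : ∀ p : V × V, (Finset.univ.filter
      fun T : Fin t → V => ∀ i, (G.Adj p.1 (T i) ↔ G.Adj p.2 (T i))).card
      = (Fintype.card V - dd G p.1 p.2) ^ t := by
    intro p
    have heq : (Finset.univ.filter fun T : Fin t → V =>
        ∀ i, (G.Adj p.1 (T i) ↔ G.Adj p.2 (T i)))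
        = Fintype.piFinset (fun _ : Fin t =>
            Finset.univ.filter fun y => (G.Adj p.1 y ↔ G.Adj p.2 y)) := by
      ext T
      simp [Fintype.mem_piFinset]
    rw [heq, Fintype.card_piFinset_const, agree_card]
  -- natural-number counting
  have hnat' : (Finset.univ : Finset (Fin t → V)).card ≤
      ∑ p ∈ (S' ×ˢ S').filter (fun p => p.1 ≠ p.2),
        (Finset.univ.filter fun T : Fin t → V =>
          ∀ i, (G.Adj p.1 (T i) ↔ G.Adj p.2 (T i))).card :=
    (Finset.card_le_card hcover).trans Finset.card_biUnion_le
  have hnat : Fintype.card V ^ t ≤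
      ∑ p ∈ (S' ×ˢ S').filter (fun p => p.1 ≠ p.2),
        (Fintype.card V - dd G p.1 p.2) ^ t := by
    rw [hcard1] at hnat'
    exact hnat'.trans (le_of_eq (Finset.sum_congr rfl fun p _ => hfib p))
  -- move to the reals
  have hreal : ((Fintype.card V : ℝ)) ^ t ≤
      ((S'.card : ℝ)) ^ 2 * ((1 - δ) * (Fintype.card V : ℝ)) ^ t := by
    have h1 : ((Fintype.card V : ℝ)) ^ t ≤
        ∑ p ∈ (S' ×ˢ S').filter (fun p => p.1 ≠ p.2),
          ((Fintype.card V - dd G p.1 p.2 : ℕ) : ℝ) ^ t := by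
      exact_mod_cast hnat
    have h2 : ∑ p ∈ (S' ×ˢ S').filter (fun p => p.1 ≠ p.2),
          ((Fintype.card V - dd G p.1 p.2 : ℕ) : ℝ) ^ t ≤
        ∑ _p ∈ (S' ×ˢ S').filter (fun p => p.1 ≠ p.2),
          ((1 - δ) * (Fintype.card V : ℝ)) ^ t := by
      refine Finset.sum_le_sum fun p hp => ?_
      have hp' := Finset.mem_filter.1 hp
      have hpm := Finset.mem_product.1 hp'.1
      have hd := hsep p.1 hpm.1 p.2 hpm.2 hp'.2
      have hddle : dd G p.1 p.2 ≤ Fintype.card V := by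
        unfold dd; exact (Finset.card_filter_le _ _).trans_eq Finset.card_univ
      have hcast : ((Fintype.card V - dd G p.1 p.2 : ℕ) : ℝ)
          = (Fintype.card V : ℝ) - (dd G p.1 p.2 : ℝ) := by
        push_cast [Nat.cast_sub hddle]; ring
      refine pow_le_pow_left₀ (by positivity) ?_ t
      rw [hcast]
      nlinarith [hd]
    have h3 : (((S' ×ˢ S').filter fun p => p.1 ≠ p.2).card : ℝ) ≤ ((S'.card : ℝ)) ^ 2 := by
      have : ((S' ×ˢ S').filter fun p => p.1 ≠ p.2).card ≤ S'.card * S'.card := by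
        calc _ ≤ (S' ×ˢ S').card := Finset.card_filter_le _ _
          _ = S'.card * S'.card := Finset.card_product _ _
      calc (((S' ×ˢ S').filter fun p => p.1 ≠ p.2).card : ℝ)
          ≤ ((S'.card * S'.card : ℕ) : ℝ) := by exact_mod_cast this
        _ = ((S'.card : ℝ)) ^ 2 := by push_cast; ring
    calc ((Fintype.card V : ℝ)) ^ t
        ≤ ∑ p ∈ (S' ×ˢ S').filter (fun p => p.1 ≠ p.2),
            ((Fintype.card V - dd G p.1 p.2 : ℕ) : ℝ) ^ t := h1
      _ ≤ ∑ _p ∈ (S' ×ˢ S').filter (fun p => p.1 ≠ p.2),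
            ((1 - δ) * (Fintype.card V : ℝ)) ^ t := h2
      _ = (((S' ×ˢ S').filter fun p => p.1 ≠ p.2).card : ℝ) *
            ((1 - δ) * (Fintype.card V : ℝ)) ^ t := by
          rw [Finset.sum_const, nsmul_eq_mul]
      _ ≤ ((S'.card : ℝ)) ^ 2 * ((1 - δ) * (Fintype.card V : ℝ)) ^ t := by
          exact mul_le_mul_of_nonneg_right h3
            (pow_nonneg (mul_nonneg (by linarith) (by positivity)) t)
  -- derive contradiction
  have hnR : (0 : ℝ) < (Fintype.card V : ℝ) := by exact_mod_cast hn
  rw [mul_pow] at hreal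
  have hfinal : (1 : ℝ) ≤ ((S'.card : ℝ)) ^ 2 * (1 - δ) ^ t := by
    have hpow : (0 : ℝ) < (Fintype.card V : ℝ) ^ t := by positivity
    rw [← mul_le_mul_iff_of_pos_right hpow]
    calc (1 : ℝ) * (Fintype.card V : ℝ) ^ t = (Fintype.card V : ℝ) ^ t := by ring
      _ ≤ ((S'.card : ℝ)) ^ 2 * ((1 - δ) ^ t * (Fintype.card V : ℝ) ^ t) := hreal
      _ = ((S'.card : ℝ)) ^ 2 * (1 - δ) ^ t * (Fintype.card V : ℝ) ^ t := by ring
  linarith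

end GPR
end
noncomputable section
namespace GPR
open Finset
set_option maxHeartbeats 1000000
variable {V : Type} [Fintype V] [DecidableEq V]

lemma card_le_of_trace_inj (G : SimpleGraph V) (d : ℕ) (hVC : VCdimLE G d)
    (S' : Finset V) {t : ℕ} (T : Fin t → V)
    (hT : ∀ z ∈ S', ∀ z' ∈ S', z ≠ z' → ∃ i, ¬ (G.Adj z (T i) ↔ G.Adj z' (T i))) :
    S'.card ≤ (t + 1) ^ d := by
  classical
  set ℱ : Finset (Finset (Fin t)) :=
    S'.image (fun z => Finset.univ.filter fun i => G.Adj z (T i)) with hℱ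
  have hinj : Set.InjOn (fun z => Finset.univ.filter fun i => G.Adj z (T i)) S' := by
    intro z hz z' hz' he
    by_contra hne
    obtain ⟨i, hi⟩ := hT z hz z' hz' hne
    apply hi
    have h1 := Finset.ext_iff.1 he i
    simp only [Finset.mem_filter, Finset.mem_univ, true_and] at h1
    exact h1
  have hcard : ℱ.card = S'.card := Finset.card_image_of_injOn hinj
  have hshat : ∀ s ∈ ℱ.shatterer, s.card ≤ d := by
    intro s hs
    rw [Finset.mem_shatterer] at hs
    have hTinj : Set.InjOn T s := by
      intro i hi j hj hij
      by_contra hne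
      obtain ⟨u, hu, hsu⟩ := hs.exists_inter_eq_singleton (Finset.mem_coe.1 hi)
      obtain ⟨z, hz, rfl⟩ := Finset.mem_image.1 hu
      have hiu : i ∈ Finset.univ.filter fun k => G.Adj z (T k) := by
        have : i ∈ s ∩ (Finset.univ.filter fun k => G.Adj z (T k)) := by
          rw [hsu]; exact Finset.mem_singleton_self i
        exact (Finset.mem_inter.1 this).2
      have hju : j ∉ (Finset.univ.filter fun k => G.Adj z (T k)) := by
        intro hju
        have : j ∈ s ∩ (Finset.univ.filter fun k => G.Adj z (T k)) :=
          Finset.mem_inter.2 ⟨Finset.mem_coe.1 hj, hju⟩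
        rw [hsu] at this
        exact hne (Finset.mem_singleton.1 this).symm
      simp only [Finset.mem_filter, Finset.mem_univ, true_and] at hiu hju
      exact hju (by rw [← hij]; exact hiu)
    have hSv : (s.image T).card = s.card := Finset.card_image_of_injOn hTinj
    have hle : (s.image T).card ≤ d := by
      apply hVC
      intro Tv hTv
      obtain ⟨u, hu, hsu⟩ := hs (Finset.filter_subset (fun i => T i ∈ Tv) s)
      obtain ⟨z, hz, rfl⟩ := Finset.mem_image.1 hu
      refine ⟨z, ?_⟩
      ext w
      simp only [Finset.mem_filter]
      constructor
      · rintro ⟨hwSv, hadj⟩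
        obtain ⟨i, hi, rfl⟩ := Finset.mem_image.1 hwSv
        have : i ∈ s ∩ (Finset.univ.filter fun k => G.Adj z (T k)) :=
          Finset.mem_inter.2 ⟨hi, by simp [hadj]⟩
        rw [hsu] at this
        exact (Finset.mem_filter.1 this).2
      · intro hw
        have hwSv : w ∈ s.image T := hTv hw
        obtain ⟨i, hi, rfl⟩ := Finset.mem_image.1 hwSv
        refine ⟨hwSv, ?_⟩
        have : i ∈ s ∩ (Finset.univ.filter fun k => G.Adj z (T k)) := by
          rw [hsu]; exact Finset.mem_filter.2 ⟨hi, hw⟩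
        have h2 := (Finset.mem_inter.1 this).2
        simpa using h2
    omega
  have hsub : ℱ.shatterer ⊆ (Finset.range (d + 1)).biUnion
      (fun i => Finset.powersetCard i (Finset.univ : Finset (Fin t))) := by
    intro s hs
    refine Finset.mem_biUnion.2 ⟨s.card, Finset.mem_range.2 (Nat.lt_succ_of_le (hshat s hs)), ?_⟩
    exact Finset.mem_powersetCard.2 ⟨Finset.subset_univ s, rfl⟩
  calc S'.card = ℱ.card := hcard.symm
    _ ≤ ℱ.shatterer.card := Finset.card_le_card_shatterer ℱ
    _ ≤ ((Finset.range (d + 1)).biUnion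
          (fun i => Finset.powersetCard i (Finset.univ : Finset (Fin t)))).card :=
        Finset.card_le_card hsub
    _ ≤ ∑ i ∈ Finset.range (d + 1), (Finset.powersetCard i (Finset.univ : Finset (Fin t))).card :=
        Finset.card_biUnion_le
    _ = ∑ i ∈ Finset.range (d + 1), Nat.choose t i := by
        refine Finset.sum_congr rfl fun i _ => ?_
        rw [Finset.card_powersetCard, Finset.card_univ, Fintype.card_fin]
    _ ≤ ∑ i ∈ Finset.range (d + 1), t ^ i * Nat.choose d i := by
        refine Finset.sum_le_sum fun i hi => ?_
        have h1 : Nat.choose t i ≤ t ^ i := Nat.choose_le_pow t i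
        have h2 : 1 ≤ Nat.choose d i :=
          Nat.choose_pos (Nat.lt_succ_iff.1 (Finset.mem_range.1 hi))
        calc Nat.choose t i ≤ t ^ i := h1
          _ = t ^ i * 1 := (mul_one _).symm
          _ ≤ t ^ i * Nat.choose d i := Nat.mul_le_mul_left _ h2
    _ = (t + 1) ^ d := by
        rw [add_pow]
        exact Finset.sum_congr rfl fun i _ => by rw [one_pow, mul_one, Nat.cast_id]
end GPR
end
noncomputable section
namespace GPR
open Finset
set_option maxHeartbeats 1000000
variable {V : Type} [Fintype V] [DecidableEq V]

lemma packing (G : SimpleGraph V) (d : ℕ) (hVC : VCdimLE G d) (δ : ℝ)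
    (hδ0 : 0 < δ) (hδ1 : δ < 1) (S : Finset V) (hS : S.Nonempty)
    (hsep : ∀ z ∈ S, ∀ z' ∈ S, z ≠ z' → δ * (Fintype.card V : ℝ) < (dd G z z' : ℝ)) :
    (S.card : ℝ) ≤ ((2 * (2 * d + 3) : ℕ) : ℝ) ^ ((2 * d + 4) * d) * δ⁻¹ ^ ((2 * d + 3) * d) := by
  set a : ℕ := 2 * d + 3 with ha
  have haR : ((a : ℕ) : ℝ) = 2 * (d : ℝ) + 3 := by push_cast [ha]; ring
  set x : ℝ := (2 * ((a : ℕ) : ℝ)) ^ (2 * d + 2) / δ ^ a with hx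
  have hxpos : 0 ≤ x := by
    apply div_nonneg _ (by positivity)
    positivity
  set s : ℕ := ⌊x⌋₊ + 1 with hs
  set t : ℕ := a * s with ht
  have hs1 : 1 ≤ s := Nat.succ_le_succ (Nat.zero_le _)
  have hsR1 : (1 : ℝ) ≤ (s : ℝ) := by exact_mod_cast hs1
  have haR3 : (3 : ℝ) ≤ ((a : ℕ) : ℝ) := by
    rw [haR]
    have : (0:ℝ) ≤ (d : ℝ) := Nat.cast_nonneg d
    linarith
  have hkey : (2 * ((a : ℕ) : ℝ)) ^ (2 * d + 2) < (s : ℝ) * δ ^ a := by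
    have h1 : x < (s : ℝ) := by
      rw [hs]; push_cast
      exact Nat.lt_floor_add_one x
    have h2 : (2 * ((a : ℕ) : ℝ)) ^ (2 * d + 2) = x * δ ^ a := by
      rw [hx, div_mul_cancel₀]
      positivity
    rw [h2]
    exact mul_lt_mul_of_pos_right h1 (by positivity)
  have htR : ((t : ℕ) : ℝ) = ((a : ℕ) : ℝ) * (s : ℝ) := by push_cast [ht]; ring
  have ht1 : 1 ≤ t := Nat.one_le_iff_ne_zero.2 (by positivity)
  have hA : (((t : ℕ) : ℝ) + 1) ^ (2 * d + 2) < (1 + δ) ^ t := by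
    have h1 : ((t : ℕ) : ℝ) + 1 ≤ 2 * ((a : ℕ) : ℝ) * (s : ℝ) := by
      rw [htR]
      have : (1 : ℝ) ≤ ((a : ℕ) : ℝ) * (s : ℝ) := by nlinarith
      nlinarith
    calc (((t : ℕ) : ℝ) + 1) ^ (2 * d + 2)
        ≤ (2 * ((a : ℕ) : ℝ) * (s : ℝ)) ^ (2 * d + 2) := by
          apply pow_le_pow_left₀ (by positivity) h1
      _ = (2 * ((a : ℕ) : ℝ)) ^ (2 * d + 2) * (s : ℝ) ^ (2 * d + 2) := by
          rw [mul_pow]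
      _ < ((s : ℝ) * δ ^ a) * (s : ℝ) ^ (2 * d + 2) :=
          mul_lt_mul_of_pos_right hkey (by positivity)
      _ = ((s : ℝ) * δ) ^ a := by rw [ha]; ring
      _ ≤ (1 + (s : ℝ) * δ) ^ a := by
          apply pow_le_pow_left₀ (by positivity)
          linarith
      _ ≤ ((1 + δ) ^ s) ^ a := by
          apply pow_le_pow_left₀ (by positivity)
          exact one_add_mul_le_pow (by linarith) s
      _ = (1 + δ) ^ t := by rw [← pow_mul, ht, Nat.mul_comm]
  -- Step 1 : S.card ≤ (t+1)^d
  have hstep1 : S.card ≤ (t + 1) ^ d := by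
    by_contra hK
    push_neg at hK
    obtain ⟨S', hS'sub, hS'card⟩ := Finset.exists_subset_card_eq (Nat.succ_le_of_lt hK)
    have hS'ne : S'.Nonempty := Finset.card_pos.1 (by omega)
    have hsep' : ∀ z ∈ S', ∀ z' ∈ S', z ≠ z' →
        δ * (Fintype.card V : ℝ) < (dd G z z' : ℝ) :=
      fun z hz z' hz' hne => hsep z (hS'sub hz) z' (hS'sub hz') hne
    have hlt : ((S'.card : ℝ)) ^ 2 * (1 - δ) ^ t < 1 := by
      have hc1 : S'.card ≤ (t + 1) ^ (d + 1) := by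
        rw [hS'card]
        have h1 : 1 ≤ (t + 1) ^ d := Nat.one_le_pow _ _ (by omega)
        calc (t + 1) ^ d + 1 ≤ 2 * (t + 1) ^ d := by omega
          _ ≤ (t + 1) * (t + 1) ^ d := Nat.mul_le_mul_right _ (by omega)
          _ = (t + 1) ^ (d + 1) := by ring
      have hc2 : ((S'.card : ℝ)) ^ 2 ≤ (((t : ℕ) : ℝ) + 1) ^ (2 * d + 2) := by
        have hcast : ((S'.card : ℝ)) ≤ (((t : ℕ) : ℝ) + 1) ^ (d + 1) := by
          exact_mod_cast hc1
        calc ((S'.card : ℝ)) ^ 2 ≤ ((((t : ℕ) : ℝ) + 1) ^ (d + 1)) ^ 2 := by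
              apply pow_le_pow_left₀ (by positivity) hcast
          _ = (((t : ℕ) : ℝ) + 1) ^ (2 * d + 2) := by
              rw [← pow_mul]; congr 1; ring
      have h1δ : (0 : ℝ) ≤ 1 - δ := by linarith
      calc ((S'.card : ℝ)) ^ 2 * (1 - δ) ^ t
          ≤ (((t : ℕ) : ℝ) + 1) ^ (2 * d + 2) * (1 - δ) ^ t := by
            apply mul_le_mul_of_nonneg_right hc2 (by positivity)
        _ < (1 + δ) ^ t * (1 - δ) ^ t :=
            mul_lt_mul_of_pos_right hA (pow_pos (by linarith) t)
        _ = ((1 + δ) * (1 - δ)) ^ t := by rw [mul_pow]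
        _ = (1 - δ ^ 2) ^ t := by congr 1; ring
        _ ≤ 1 := by
            apply pow_le_one₀ (by nlinarith) (by nlinarith)
    obtain ⟨T, hT⟩ := exists_trace_inj G S' t δ hδ1 hsep' hlt hS'ne
    have := card_le_of_trace_inj G d hVC S' T hT
    omega
  -- Step 2 : transfer to the real bound
  have hsle : (s : ℝ) ≤ ((2 * ((a : ℕ) : ℝ)) ^ (2 * d + 2) + 1) * δ⁻¹ ^ a := by
    have h1 : (s : ℝ) ≤ x + 1 := by
      rw [hs]; push_cast
      have := Nat.floor_le hxpos
      linarith
    have h2 : x = (2 * ((a : ℕ) : ℝ)) ^ (2 * d + 2) * δ⁻¹ ^ a := by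
      rw [hx, div_eq_mul_inv, inv_pow]
    have h3 : (1 : ℝ) ≤ δ⁻¹ ^ a := by
      apply one_le_pow₀
      rw [le_inv_comm₀ (by norm_num) hδ0]
      linarith
    nlinarith [pow_nonneg (le_of_lt hδ0) a]
  have h2a : (2 : ℝ) ≤ 2 * ((a : ℕ) : ℝ) := by nlinarith
  have hfinal : ((t : ℕ) : ℝ) + 1 ≤ (2 * ((a : ℕ) : ℝ)) ^ (2 * d + 4) * δ⁻¹ ^ a := by
    have h1 : ((t : ℕ) : ℝ) + 1 ≤ 2 * ((a : ℕ) : ℝ) * (s : ℝ) := by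
      rw [htR]
      have : (1 : ℝ) ≤ ((a : ℕ) : ℝ) * (s : ℝ) := by nlinarith
      nlinarith
    have h3 : (1 : ℝ) ≤ δ⁻¹ ^ a := by
      apply one_le_pow₀
      rw [le_inv_comm₀ (by norm_num) hδ0]
      linarith
    have h4 : 2 * ((a : ℕ) : ℝ) * (((2 * ((a : ℕ) : ℝ)) ^ (2 * d + 2) + 1) * δ⁻¹ ^ a)
        ≤ (2 * ((a : ℕ) : ℝ)) ^ (2 * d + 4) * δ⁻¹ ^ a := by
      have h5 : 2 * ((a : ℕ) : ℝ) * ((2 * ((a : ℕ) : ℝ)) ^ (2 * d + 2) + 1)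
          ≤ (2 * ((a : ℕ) : ℝ)) ^ (2 * d + 4) := by
        have e1 : (2 * ((a : ℕ) : ℝ)) ^ (2 * d + 3)
            = 2 * ((a : ℕ) : ℝ) * (2 * ((a : ℕ) : ℝ)) ^ (2 * d + 2) := by ring
        have e2 : (2 * ((a : ℕ) : ℝ)) ^ (2 * d + 4)
            = 2 * ((a : ℕ) : ℝ) * (2 * ((a : ℕ) : ℝ)) ^ (2 * d + 3) := by ring
        have hb : (2 * ((a : ℕ) : ℝ)) ≤ (2 * ((a : ℕ) : ℝ)) ^ (2 * d + 3) := by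
          apply le_self_pow₀ (by linarith)
          omega
        nlinarith [pow_nonneg (by linarith : (0:ℝ) ≤ 2 * ((a : ℕ) : ℝ)) (2 * d + 2),
          pow_nonneg (by linarith : (0:ℝ) ≤ 2 * ((a : ℕ) : ℝ)) (2 * d + 3)]
      calc 2 * ((a : ℕ) : ℝ) * (((2 * ((a : ℕ) : ℝ)) ^ (2 * d + 2) + 1) * δ⁻¹ ^ a)
          = (2 * ((a : ℕ) : ℝ) * ((2 * ((a : ℕ) : ℝ)) ^ (2 * d + 2) + 1)) * δ⁻¹ ^ a := by
            ring
        _ ≤ (2 * ((a : ℕ) : ℝ)) ^ (2 * d + 4) * δ⁻¹ ^ a :=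
            mul_le_mul_of_nonneg_right h5 (by positivity)
    calc ((t : ℕ) : ℝ) + 1 ≤ 2 * ((a : ℕ) : ℝ) * (s : ℝ) := h1
      _ ≤ 2 * ((a : ℕ) : ℝ) * (((2 * ((a : ℕ) : ℝ)) ^ (2 * d + 2) + 1) * δ⁻¹ ^ a) := by
          apply mul_le_mul_of_nonneg_left hsle (by linarith)
      _ ≤ (2 * ((a : ℕ) : ℝ)) ^ (2 * d + 4) * δ⁻¹ ^ a := h4
  have hScast : ((S.card : ℕ) : ℝ) ≤ (((t : ℕ) : ℝ) + 1) ^ d := by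
    have h1 : ((S.card : ℕ) : ℝ) ≤ (((t + 1 : ℕ)) ^ d : ℕ) := by exact_mod_cast hstep1
    calc ((S.card : ℕ) : ℝ) ≤ (((t + 1 : ℕ)) ^ d : ℕ) := h1
      _ = (((t : ℕ) : ℝ) + 1) ^ d := by push_cast; ring
  calc ((S.card : ℕ) : ℝ) ≤ (((t : ℕ) : ℝ) + 1) ^ d := hScast
    _ ≤ ((2 * ((a : ℕ) : ℝ)) ^ (2 * d + 4) * δ⁻¹ ^ a) ^ d := by
        apply pow_le_pow_left₀ (by positivity) hfinal
    _ = ((2 * (2 * d + 3) : ℕ) : ℝ) ^ ((2 * d + 4) * d) * δ⁻¹ ^ ((2 * d + 3) * d) := by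
        rw [mul_pow, ← pow_mul, ← pow_mul, ha]
        push_cast
        ring
end GPR
end
open GPR Finset in
/-- Ultra-strong regularity with polynomially many parts for graphs of bounded
VC dimension (Alon–Fischer–Newman, Lovász–Szegedy, Fox–Pach–Suk). -/
theorem graph_poly_regularity (d : ℕ) (hd : 1 ≤ d) :
    ∃ c : ℕ, ∀ ε : ℝ, 0 < ε → ε < 1 →
      ∀ (V : Type) [Fintype V] [DecidableEq V] (G : SimpleGraph V),
        VCdimLE G d →
        ∃ P : Finset (Finset V), IsVertexPartition P Finset.univ ∧
          ((P.card : ℝ) ≤ ε⁻¹ ^ c) ∧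
          (1 - ε) * ((Fintype.card V : ℝ)) ^ 2 ≤
            (((Finset.univ : Finset (V × V)).filter fun p =>
              ∀ A ∈ P, ∀ B ∈ P, p.1 ∈ A → p.2 ∈ B →
                (gDensity G A B ≤ ε ∨ 1 - ε ≤ gDensity G A B)).card : ℝ) := by
  classical
  refine ⟨2 * ((2 * d + 3) * d) +
    ((2 * (2 * d + 3)) ^ ((2 * d + 4) * d) * 4 ^ ((2 * d + 3) * d)), ?_⟩
  set m : ℕ := (2 * d + 3) * d with hm
  set Mn : ℕ := (2 * (2 * d + 3)) ^ ((2 * d + 4) * d) * 4 ^ m with hMn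
  intro ε hε0 hε1 V _ _ G hVC
  have hεinv1 : (1 : ℝ) ≤ ε⁻¹ := one_le_inv_iff₀.2 ⟨hε0, le_of_lt hε1⟩
  have hgd_nonneg : ∀ A B : Finset V, 0 ≤ gDensity G A B := by
    intro A B
    unfold gDensity
    positivity
  -- the trivial partition, used in degenerate cases
  have htrivpart : IsVertexPartition ({Finset.univ} : Finset (Finset V)) Finset.univ := by
    constructor
    · intro Y _; exact Finset.subset_univ Y
    · intro x _
      exact ⟨Finset.univ, ⟨Finset.mem_singleton_self _, Finset.mem_univ x⟩,
        fun Y hY => Finset.mem_singleton.1 hY.1⟩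
  have htrivcard : ((({Finset.univ} : Finset (Finset V))).card : ℝ) ≤ ε⁻¹ ^ (2 * m + Mn) := by
    rw [Finset.card_singleton]
    exact_mod_cast one_le_pow₀ hεinv1
  by_cases hhalf : (1 : ℝ) / 2 < ε
  · -- ε > 1/2 : every pair of sets is homogeneous
    refine ⟨{Finset.univ}, htrivpart, htrivcard, ?_⟩
    have hfull : ((Finset.univ : Finset (V × V)).filter fun p =>
        ∀ A ∈ ({Finset.univ} : Finset (Finset V)), ∀ B ∈ ({Finset.univ} : Finset (Finset V)),
          p.1 ∈ A → p.2 ∈ B →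
          (gDensity G A B ≤ ε ∨ 1 - ε ≤ gDensity G A B)) = Finset.univ := by
      apply Finset.filter_true_of_mem
      intro p _ A hA B hB _ _
      rcases le_or_gt (gDensity G A B) ε with h | h
      · exact Or.inl h
      · refine Or.inr ?_
        have := hgd_nonneg A B
        linarith
    rw [hfull, Finset.card_univ, Fintype.card_prod]
    push_cast
    nlinarith [sq_nonneg ((Fintype.card V : ℝ)), Nat.cast_nonneg (α := ℝ) (Fintype.card V)]
  push_neg at hhalf
  by_cases hV0 : Fintype.card V = 0
  · -- empty vertex set
    refine ⟨{Finset.univ}, htrivpart, htrivcard, ?_⟩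
    have hn0 : ((Fintype.card V : ℝ)) = 0 := by exact_mod_cast hV0
    rw [hn0]
    have : (0 : ℝ) ≤ (((Finset.univ : Finset (V × V)).filter fun p =>
        ∀ A ∈ ({Finset.univ} : Finset (Finset V)), ∀ B ∈ ({Finset.univ} : Finset (Finset V)),
          p.1 ∈ A → p.2 ∈ B →
          (gDensity G A B ≤ ε ∨ 1 - ε ≤ gDensity G A B)).card : ℝ) := by positivity
    nlinarith
  -- main case
  have hn0 : 0 < Fintype.card V := Nat.pos_of_ne_zero hV0
  have hnR : (0 : ℝ) < (Fintype.card V : ℝ) := by exact_mod_cast hn0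
  set n : ℝ := (Fintype.card V : ℝ) with hndef
  set δ : ℝ := ε ^ 2 / 4 with hδdef
  have hδ0 : 0 < δ := by positivity
  have hδ1 : δ < 1 := by nlinarith
  -- a maximal δn-separated set
  set Sep : Finset V → Prop :=
    fun S => ∀ z ∈ S, ∀ z' ∈ S, z ≠ z' → δ * n < (dd G z z' : ℝ) with hSep
  have hPne : ((Finset.univ : Finset V).powerset.filter Sep).Nonempty :=
    ⟨∅, Finset.mem_filter.2 ⟨Finset.mem_powerset.2 (Finset.empty_subset _),
      fun z hz => absurd hz (Finset.notMem_empty z)⟩⟩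
  obtain ⟨S, hSmem, hSmax⟩ :=
    Finset.exists_max_image ((Finset.univ : Finset V).powerset.filter Sep) Finset.card hPne
  have hSsep : Sep S := (Finset.mem_filter.1 hSmem).2
  have hcover : ∀ v : V, ∃ z, z ∈ S ∧ (dd G v z : ℝ) ≤ δ * n := by
    intro v
    by_contra hcon
    push_neg at hcon
    have hvS : v ∉ S := by
      intro hv
      have h1 := hcon v hv
      have h2 : dd G v v = 0 := by
        unfold dd
        rw [Finset.card_eq_zero, Finset.filter_eq_empty_iff]
        intro y _
        simp
      rw [h2] at h1
      simp only [Nat.cast_zero] at h1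
      nlinarith
    have hSins : Sep (insert v S) := by
      intro z hz z' hz' hne
      rcases Finset.mem_insert.1 hz with rfl | hz2 <;>
        rcases Finset.mem_insert.1 hz' with h' | hz2'
      · exact absurd h'.symm hne
      · exact hcon z' hz2'
      · subst h'
        rw [dd_symm]
        exact hcon z hz2
      · exact hSsep z hz2 z' hz2' hne
    have hmem' : insert v S ∈ (Finset.univ : Finset V).powerset.filter Sep :=
      Finset.mem_filter.2 ⟨Finset.mem_powerset.2 (Finset.subset_univ _), hSins⟩
    have hle := hSmax _ hmem'
    rw [Finset.card_insert_of_notMem hvS] at hle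
    omega
  choose f hfS hfdist using hcover
  have hNE : Nonempty V := Fintype.card_pos_iff.1 hn0
  obtain ⟨v0⟩ := hNE
  have hSne : S.Nonempty := ⟨f v0, hfS v0⟩
  set P : Finset (Finset V) := Finset.univ.image (Cl f) with hP
  have hCmemP : ∀ x : V, Cl f x ∈ P :=
    fun x => Finset.mem_image_of_mem _ (Finset.mem_univ x)
  refine ⟨P, ?_, ?_, ?_⟩
  · -- partition
    constructor
    · intro Y _; exact Finset.subset_univ Y
    · intro x _
      refine ⟨Cl f x, ⟨hCmemP x, mem_Cl f x⟩, ?_⟩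
      rintro Y ⟨hYP, hxY⟩
      obtain ⟨x₀, _, rfl⟩ := Finset.mem_image.1 hYP
      exact (Cl_eq_of_mem f hxY).symm
  · -- cardinality bound
    have hPS : P ⊆ S.image (fun z => Finset.univ.filter fun u => f u = z) := by
      intro Y hY
      obtain ⟨x, _, rfl⟩ := Finset.mem_image.1 hY
      exact Finset.mem_image.2 ⟨f x, hfS x, rfl⟩
    have hcard1 : P.card ≤ S.card :=
      (Finset.card_le_card hPS).trans Finset.card_image_le
    have hpack := packing G d hVC δ hδ0 hδ1 S hSne hSsep
    have hδinv : δ⁻¹ = 4 * ε⁻¹ ^ 2 := by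
      rw [hδdef, inv_div, div_eq_mul_inv, inv_pow]
    have hδm : δ⁻¹ ^ m = 4 ^ m * ε⁻¹ ^ (2 * m) := by
      rw [hδinv, mul_pow, ← pow_mul]
    have h2inv : (2 : ℝ) ≤ ε⁻¹ := by
      rw [← one_div, le_div_iff₀ hε0]
      linarith
    have hMle : (Mn : ℝ) ≤ ε⁻¹ ^ Mn := by
      have h1 : (Mn : ℝ) ≤ 2 ^ Mn := by
        have := Nat.lt_two_pow_self (n := Mn)
        exact_mod_cast this.le
      calc (Mn : ℝ) ≤ 2 ^ Mn := h1
        _ ≤ ε⁻¹ ^ Mn := pow_le_pow_left₀ (by norm_num) h2inv Mn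
    calc (P.card : ℝ) ≤ (S.card : ℝ) := by exact_mod_cast hcard1
      _ ≤ ((2 * (2 * d + 3) : ℕ) : ℝ) ^ ((2 * d + 4) * d) * δ⁻¹ ^ ((2 * d + 3) * d) := hpack
      _ = ((2 * (2 * d + 3) : ℕ) : ℝ) ^ ((2 * d + 4) * d) * (4 ^ m * ε⁻¹ ^ (2 * m)) := by
          rw [← hm, hδm]
      _ = (Mn : ℝ) * ε⁻¹ ^ (2 * m) := by
          rw [hMn]; push_cast; ring
      _ ≤ ε⁻¹ ^ Mn * ε⁻¹ ^ (2 * m) :=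
          mul_le_mul_of_nonneg_right hMle (by positivity)
      _ = ε⁻¹ ^ (2 * m + Mn) := by rw [← pow_add, Nat.add_comm]
  · -- the counting estimate
    set good : V × V → Prop := fun p =>
      gDensity G (Cl f p.1) (Cl f p.2) ≤ ε ∨ 1 - ε ≤ gDensity G (Cl f p.1) (Cl f p.2)
      with hgood
    have hpred : ∀ p : V × V, (∀ A ∈ P, ∀ B ∈ P, p.1 ∈ A → p.2 ∈ B →
        (gDensity G A B ≤ ε ∨ 1 - ε ≤ gDensity G A B)) ↔ good p := by
      intro p
      constructor
      · intro h
        exact h _ (hCmemP p.1) _ (hCmemP p.2) (mem_Cl f p.1) (mem_Cl f p.2)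
      · intro h A hA B hB h1 h2
        obtain ⟨x₀, _, rfl⟩ := Finset.mem_image.1 hA
        obtain ⟨y₀, _, rfl⟩ := Finset.mem_image.1 hB
        rw [← Cl_eq_of_mem f h1, ← Cl_eq_of_mem f h2]
        exact h
    have hfiltereq : ((Finset.univ : Finset (V × V)).filter fun p =>
        ∀ A ∈ P, ∀ B ∈ P, p.1 ∈ A → p.2 ∈ B →
          (gDensity G A B ≤ ε ∨ 1 - ε ≤ gDensity G A B))
        = (Finset.univ : Finset (V × V)).filter good :=
      Finset.filter_congr fun p _ => hpred p
    rw [hfiltereq]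
    set Bad : Finset (V × V) := (Finset.univ : Finset (V × V)).filter (fun p => ¬ good p)
      with hBad
    have hsplit := Finset.card_filter_add_card_filter_not
      (s := (Finset.univ : Finset (V × V))) (p := good)
    have hcardVV : (Finset.univ : Finset (V × V)).card = Fintype.card V * Fintype.card V := by
      rw [Finset.card_univ, Fintype.card_prod]
    -- the ℓ¹ bound
    have hsum := global_bound G f δ (le_of_lt hδ0) hfdist
    have hlow : ε * (Bad.card : ℝ) ≤
        ∑ p ∈ Bad, |aR G p.1 p.2 - gDensity G (Cl f p.1) (Cl f p.2)| := by
      have hpt : ∀ p ∈ Bad, ε ≤ |aR G p.1 p.2 - gDensity G (Cl f p.1) (Cl f p.2)| := by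
        intro p hp
        have hbp := (Finset.mem_filter.1 hp).2
        simp only [hgood] at hbp
        push_neg at hbp
        obtain ⟨hb1, hb2⟩ := hbp
        unfold aR
        by_cases hadj : G.Adj p.1 p.2
        · rw [if_pos hadj, abs_of_nonneg (by linarith)]
          linarith
        · rw [if_neg hadj, zero_sub, abs_neg,
            abs_of_nonneg (hgd_nonneg _ _)]
          linarith
      calc ε * (Bad.card : ℝ) = ∑ _p ∈ Bad, ε := by
            rw [Finset.sum_const, nsmul_eq_mul, mul_comm]
        _ ≤ _ := Finset.sum_le_sum hpt
    have hmid : ∑ p ∈ Bad, |aR G p.1 p.2 - gDensity G (Cl f p.1) (Cl f p.2)|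
        ≤ ∑ x, ∑ y, |aR G x y - gDensity G (Cl f x) (Cl f y)| := by
      calc ∑ p ∈ Bad, |aR G p.1 p.2 - gDensity G (Cl f p.1) (Cl f p.2)|
          ≤ ∑ p : V × V, |aR G p.1 p.2 - gDensity G (Cl f p.1) (Cl f p.2)| :=
            Finset.sum_le_sum_of_subset_of_nonneg (Finset.filter_subset _ _)
              (fun p _ _ => abs_nonneg _)
        _ = ∑ x, ∑ y, |aR G x y - gDensity G (Cl f x) (Cl f y)| := by
            rw [Fintype.sum_prod_type]
    have hBadcard : (Bad.card : ℝ) ≤ ε * n ^ 2 := by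
      have h1 : ε * (Bad.card : ℝ) ≤ 4 * δ * n ^ 2 := le_trans hlow (le_trans hmid hsum)
      have h2 : 4 * δ * n ^ 2 = ε * (ε * n ^ 2) := by rw [hδdef]; ring
      rw [h2] at h1
      exact (mul_le_mul_iff_of_pos_left hε0).1 h1
    have hgoodcard : ((Finset.univ : Finset (V × V)).filter good).card + Bad.card
        = Fintype.card V * Fintype.card V := by
      rw [hBad, ← hcardVV]
      exact hsplit
    have hcast : (((Finset.univ : Finset (V × V)).filter good).card : ℝ) + (Bad.card : ℝ)
        = n * n := by
      rw [hndef]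
      exact_mod_cast congrArg (Nat.cast : ℕ → ℝ) hgoodcard
    have hnn : n * n = n ^ 2 := by ring
    linarith
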